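/- arXiv:2601.03143 — 2 statements merged into one kernel-verified Lean document; each statement's English description precedes it below -/
import Mathlib

section
/- Let μ₀ > 0 be a real constant. Define for μ_i, μ_j ∈ ℝ³ and r ∈ ℝ³ with r ≠ 0 the dipole force f(μ_i, μ_j, r) = (3μ₀/(4π))·[ (μ_i·μ_j)/‖r‖⁵ · r + (μ_i·r)/‖r‖⁵ · μ_j + (μ_j·r)/‖r‖⁵ · μ_i − 5(μ_i·r)(μ_j·r)/‖r‖⁷ · r ] and the dipole torque τ(μ_i, μ_j, r) = (μ₀/(4π))· μ_j × ( 3r(μ_i·r)/‖r‖⁵ − μ_i/‖r‖³ ). Then the total torque of the two-dipole interaction about the position of dipole i vanishes: τ(μ_i, μ_j, r) + τ(μ_j, μ_i, −r) + r × f(μ_i, μ_j, r) = 0 for all μ_i, μ_j ∈ ℝ³ and all r ≠ 0. -/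
noncomputable section

/-- Euclidean inner product on ℝ³. -/
def dot3 (u v : Fin 3 → ℝ) : ℝ := ∑ i, u i * v i

/-- Euclidean norm on ℝ³. -/
def norm3 (u : Fin 3 → ℝ) : ℝ := Real.sqrt (dot3 u u)

/-- Cross product on ℝ³. -/
def cross3 (u v : Fin 3 → ℝ) : Fin 3 → ℝ :=
  ![u 1 * v 2 - u 2 * v 1, u 2 * v 0 - u 0 * v 2, u 0 * v 1 - u 1 * v 0]

/-- The magnetic dipole interaction force exerted on dipole `μj` by dipole `μi`,
where `r` is the position of dipole j relative to dipole i. -/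
def dipoleForce (μ₀ : ℝ) (μi μj r : Fin 3 → ℝ) : Fin 3 → ℝ :=
  (3 * μ₀ / (4 * Real.pi)) •
    ((dot3 μi μj / norm3 r ^ 5) • r + (dot3 μi r / norm3 r ^ 5) • μj +
      (dot3 μj r / norm3 r ^ 5) • μi -
      (5 * dot3 μi r * dot3 μj r / norm3 r ^ 7) • r)

/-- The magnetic dipole interaction torque exerted on dipole `μj` by dipole `μi`,
where `r` is the position of dipole j relative to dipole i. -/
def dipoleTorque (μ₀ : ℝ) (μi μj r : Fin 3 → ℝ) : Fin 3 → ℝ :=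
  (μ₀ / (4 * Real.pi)) •
    cross3 μj ((3 * dot3 μi r / norm3 r ^ 5) • r - (1 / norm3 r ^ 3) • μi)

lemma dot3_self_nonneg (u : Fin 3 → ℝ) : 0 ≤ dot3 u u := by
  unfold dot3
  apply Finset.sum_nonneg
  intro i _
  exact mul_self_nonneg _

lemma norm3_neg (r : Fin 3 → ℝ) : norm3 (-r) = norm3 r := by
  unfold norm3 dot3
  congr 1
  apply Finset.sum_congr rfl
  intro i _
  simp

lemma norm3_pos {r : Fin 3 → ℝ} (hr : r ≠ 0) : 0 < norm3 r := by
  unfold norm3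
  apply Real.sqrt_pos.mpr
  rcases lt_or_eq_of_le (dot3_self_nonneg r) with h | h
  · exact h
  · exfalso
    apply hr
    funext i
    have h0 : dot3 r r = 0 := h.symm
    unfold dot3 at h0
    have := (Finset.sum_eq_zero_iff_of_nonneg (fun i _ => mul_self_nonneg (r i))).mp h0 i
      (Finset.mem_univ i)
    have := mul_self_eq_zero.mp this
    simpa using this

lemma norm3_sq (r : Fin 3 → ℝ) : norm3 r ^ 2 = dot3 r r := by
  unfold norm3
  exact Real.sq_sqrt (dot3_self_nonneg r)

set_option maxHeartbeats 1600000

/-- the total torque of the two-dipole interaction about the position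
of dipole i vanishes. -/
theorem dipole_total_torque_vanishes (μ₀ : ℝ) (hμ₀ : 0 < μ₀) :
    ∀ (μi μj r : Fin 3 → ℝ), r ≠ 0 →
      dipoleTorque μ₀ μi μj r + dipoleTorque μ₀ μj μi (-r) +
        cross3 r (dipoleForce μ₀ μi μj r) = 0 := by
  intro μi μj r hr
  have hpi : Real.pi ≠ 0 := Real.pi_ne_zero
  have hn : norm3 r ≠ 0 := (norm3_pos hr).ne'
  have hn2 : norm3 r ^ 2 = r 0 * r 0 + r 1 * r 1 + r 2 * r 2 := by
    rw [norm3_sq]; unfold dot3; simp [Fin.sum_univ_three]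
  have hdotneg : ∀ u : Fin 3 → ℝ, dot3 u (-r) = -dot3 u r := by
    intro u; unfold dot3; simp only [Fin.sum_univ_three, Pi.neg_apply]; ring
  have h3 : norm3 r ^ 3 = norm3 r * (r 0 * r 0 + r 1 * r 1 + r 2 * r 2) := by
    rw [← hn2]; ring
  have h5 : norm3 r ^ 5 = norm3 r * (r 0 * r 0 + r 1 * r 1 + r 2 * r 2) ^ 2 := by
    rw [← hn2]; ring
  have h7 : norm3 r ^ 7 = norm3 r * (r 0 * r 0 + r 1 * r 1 + r 2 * r 2) ^ 3 := by
    rw [← hn2]; ring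
  have hs : r 0 * r 0 + r 1 * r 1 + r 2 * r 2 ≠ 0 := by rw [← hn2]; positivity
  funext k
  fin_cases k <;>
  · simp only [dipoleTorque, dipoleForce, cross3, norm3_neg, hdotneg, dot3,
      Fin.sum_univ_three, Pi.add_apply, Pi.sub_apply, Pi.smul_apply, Pi.neg_apply,
      Pi.zero_apply, smul_eq_mul, Matrix.cons_val_zero, Matrix.cons_val_one,
      Matrix.head_cons, Matrix.cons_val_two, Matrix.tail_cons, h3, h5, h7,
      Fin.isValue, Matrix.cons_val, Fin.zero_eta, Fin.mk_one, Fin.reduceFinMk]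
    field_simp
    ring
end
end

section
/- Let μ₀ > 0 be a real constant, let r ∈ ℝ³ with r ≠ 0, let ω > 0, and let μ_iˢ, μ_iᶜ, μ_jˢ, μ_jᶜ ∈ ℝ³. Define the time-varying dipole moments μ_i(t) = μ_iˢ·sin(ωt) + μ_iᶜ·cos(ωt) and μ_j(t) = μ_jˢ·sin(ωt) + μ_jᶜ·cos(ωt), and the dipole force f(μ_i, μ_j, r) = (3μ₀/(4π))·[ (μ_i·μ_j)/‖r‖⁵ · r + (μ_i·r)/‖r‖⁵ · μ_j + (μ_j·r)/‖r‖⁵ · μ_i − 5(μ_i·r)(μ_j·r)/‖r‖⁷ · r ]. Then the first-order average of the force over one period T = 2π/ω equals (1/T)·∫₀ᵀ f(μ_i(t), μ_j(t), r) dt = (1/2)·( f(μ_iˢ, μ_jˢ, r) + f(μ_iᶜ, μ_jᶜ, r) ). -/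
noncomputable section

lemma force_bilin (μ₀ s c : ℝ) (μis μic μjs μjc r : Fin 3 → ℝ) :
    dipoleForce μ₀ (s • μis + c • μic) (s • μjs + c • μjc) r
      = (s*s) • dipoleForce μ₀ μis μjs r + (s*c) • dipoleForce μ₀ μis μjc r
        + (s*c) • dipoleForce μ₀ μic μjs r + (c*c) • dipoleForce μ₀ μic μjc r := by
  funext k
  simp [dipoleForce, dot3, Fin.sum_univ_three]
  ring

lemma int_sin_sq (ω T : ℝ) (hω : 0 < ω) (hT : T = 2 * Real.pi / ω) :
    ∫ t in (0:ℝ)..T, Real.sin (ω * t) * Real.sin (ω * t) = T / 2 := by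
  have hω0 : ω ≠ 0 := ne_of_gt hω
  simp_rw [← sq]
  rw [intervalIntegral.integral_comp_mul_left (fun x => Real.sin x ^ 2) hω0]
  have hωT : ω * T = 2 * Real.pi := by rw [hT]; field_simp
  rw [mul_zero, hωT, integral_sin_sq]
  simp [Real.sin_two_pi, Real.cos_two_pi, hT]
  field_simp

lemma int_cos_sq (ω T : ℝ) (hω : 0 < ω) (hT : T = 2 * Real.pi / ω) :
    ∫ t in (0:ℝ)..T, Real.cos (ω * t) * Real.cos (ω * t) = T / 2 := by
  have hω0 : ω ≠ 0 := ne_of_gt hω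
  simp_rw [← sq]
  rw [intervalIntegral.integral_comp_mul_left (fun x => Real.cos x ^ 2) hω0]
  have hωT : ω * T = 2 * Real.pi := by rw [hT]; field_simp
  rw [mul_zero, hωT, integral_cos_sq]
  simp [Real.sin_two_pi, Real.cos_two_pi, hT]
  field_simp

lemma int_sin_cos (ω T : ℝ) (hω : 0 < ω) (hT : T = 2 * Real.pi / ω) :
    ∫ t in (0:ℝ)..T, Real.sin (ω * t) * Real.cos (ω * t) = 0 := by
  have hω0 : ω ≠ 0 := ne_of_gt hω
  rw [intervalIntegral.integral_comp_mul_left (fun x => Real.sin x * Real.cos x) hω0]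
  have hωT : ω * T = 2 * Real.pi := by rw [hT]; field_simp
  rw [mul_zero, hωT, integral_sin_mul_cos₁]
  simp [Real.sin_two_pi]

/-- the first-order average over one period `T = 2π/ω` of the dipole
force between two AC-driven dipoles equals half the sum of the sine–sine and
cosine–cosine forces. -/
theorem dipoleForce_first_order_average
    (μ₀ : ℝ) (hμ₀ : 0 < μ₀) (r : Fin 3 → ℝ) (hr : r ≠ 0)
    (ω : ℝ) (hω : 0 < ω) (μis μic μjs μjc : Fin 3 → ℝ)
    (T : ℝ) (hT : T = 2 * Real.pi / ω) :
    (1 / T) • (∫ t in (0 : ℝ)..T,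
        dipoleForce μ₀ (Real.sin (ω * t) • μis + Real.cos (ω * t) • μic)
          (Real.sin (ω * t) • μjs + Real.cos (ω * t) • μjc) r) =
      (1 / 2 : ℝ) • (dipoleForce μ₀ μis μjs r + dipoleForce μ₀ μic μjc r) := by
  have hT0 : T ≠ 0 := by
    rw [hT]; positivity
  set F1 := dipoleForce μ₀ μis μjs r
  set F2 := dipoleForce μ₀ μis μjc r
  set F3 := dipoleForce μ₀ μic μjs r
  set F4 := dipoleForce μ₀ μic μjc r
  have hcont : ∀ (f g : ℝ → ℝ), Continuous f → Continuous g → ∀ (F : Fin 3 → ℝ),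
      IntervalIntegrable (fun t => (f t * g t) • F) MeasureTheory.volume 0 T := by
    intro f g hf hg F
    exact ((hf.mul hg).smul continuous_const).intervalIntegrable 0 T
  have hs : Continuous fun t => Real.sin (ω * t) := by fun_prop
  have hc : Continuous fun t => Real.cos (ω * t) := by fun_prop
  simp_rw [force_bilin]
  rw [intervalIntegral.integral_add (((hcont _ _ hs hs F1).add (hcont _ _ hs hc F2)).add
      (hcont _ _ hs hc F3)) (hcont _ _ hc hc F4),
    intervalIntegral.integral_add ((hcont _ _ hs hs F1).add (hcont _ _ hs hc F2))
      (hcont _ _ hs hc F3),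
    intervalIntegral.integral_add (hcont _ _ hs hs F1) (hcont _ _ hs hc F2)]
  rw [intervalIntegral.integral_smul_const, intervalIntegral.integral_smul_const,
    intervalIntegral.integral_smul_const, intervalIntegral.integral_smul_const]
  rw [int_sin_sq ω T hω hT, int_cos_sq ω T hω hT, int_sin_cos ω T hω hT]
  simp only [zero_smul, add_zero, smul_add, smul_smul]
  have : 1 / T * (T / 2) = 1 / 2 := by field_simp
  rw [this]
end
end
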